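/- At most one of a mutually added pair of edges is useful: let (V, W, b) be an influence network, v₁ ≠ v₂ nodes with W(v₁,v₂) = W(v₂,v₁) = 0, and let W' agree with W everywhere except W'(v₁,v₂) = w₁ > 0 and W'(v₂,v₁) = w₂ > 0. If a seed set S ⊆ V achieves full influenceability in (V, W', b), then S ∪ {v₁} or S ∪ {v₂} achieves full influenceability in (V, W, b). -/
import Mathlib


/-!
Influence barricade model: a finite vertex set `V : Finset ι`, edge weights
`W : ι → ι → ℝ` (an edge `u → v` exists iff `W u v > 0`), and barricade
factors `b : ι → ℝ`.  For a seed set `S ⊆ V`, the diffusion process is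
`A 0 = S` and `A (t+1) = A t ∪ {u ∈ V : ∑ v ∈ A t, W v u ≥ b u}`.
-/

open Finset

open Classical in
/-- One step of the diffusion process under the influence barricade model. -/
noncomputable def diffStep {ι : Type*} [DecidableEq ι] (V : Finset ι)
    (W : ι → ι → ℝ) (b : ι → ℝ) (A : Finset ι) : Finset ι :=
  A ∪ V.filter (fun u => b u ≤ ∑ v ∈ A, W v u)

/-- `activeSet V W b S t` is the set `A_t(S)` of nodes active at time `t`. -/
noncomputable def activeSet {ι : Type*} [DecidableEq ι] (V : Finset ι)
    (W : ι → ι → ℝ) (b : ι → ℝ) (S : Finset ι) : ℕ → Finset ι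
  | 0 => S
  | t + 1 => diffStep V W b (activeSet V W b S t)

/-- The final active set `A(S) = A_{|V|}(S)`. -/
noncomputable def finalActive {ι : Type*} [DecidableEq ι] (V : Finset ι)
    (W : ι → ι → ℝ) (b : ι → ℝ) (S : Finset ι) : Finset ι :=
  activeSet V W b S V.card

/-- `S` achieves full influenceability: every node is eventually active. -/
def FullInf {ι : Type*} [DecidableEq ι] (V : Finset ι) (W : ι → ι → ℝ)
    (b : ι → ℝ) (S : Finset ι) : Prop :=
  finalActive V W b S = V

/-- `σ(S)`: the number of nodes active at the end of the influence process. -/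
noncomputable def sigmaInf {ι : Type*} [DecidableEq ι] (V : Finset ι)
    (W : ι → ι → ℝ) (b : ι → ℝ) (S : Finset ι) : ℕ :=
  (finalActive V W b S).card

/-- The minimum seed number: the least cardinality of a seed set achieving
full influenceability. -/
noncomputable def minSeed {ι : Type*} [DecidableEq ι] (V : Finset ι)
    (W : ι → ι → ℝ) (b : ι → ℝ) : ℕ :=
  sInf {n | ∃ S : Finset ι, S ⊆ V ∧ S.card = n ∧ FullInf V W b S}

lemma seed_subset_activeSet {ι : Type*} [DecidableEq ι] (V : Finset ι)
    (W : ι → ι → ℝ) (b : ι → ℝ) (S : Finset ι) (t : ℕ) :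
    S ⊆ activeSet V W b S t := by
  induction t with
  | zero => exact subset_rfl
  | succ t ih => exact ih.trans (subset_union_left)

lemma activeSet_subset_V {ι : Type*} [DecidableEq ι] (V : Finset ι)
    (W : ι → ι → ℝ) (b : ι → ℝ) (S : Finset ι) (hS : S ⊆ V) (t : ℕ) :
    activeSet V W b S t ⊆ V := by
  induction t with
  | zero => exact hS
  | succ t ih =>
      exact Finset.union_subset ih (Finset.filter_subset _ _)

lemma activeSet_monotone {ι : Type*} [DecidableEq ι] (V : Finset ι)
    (W : ι → ι → ℝ) (b : ι → ℝ) (S : Finset ι) :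
    Monotone (activeSet V W b S) :=
  monotone_nat_of_le_succ (fun _ => Finset.le_iff_subset.2 subset_union_left)

/-- Key auxiliary lemma: if `x` never activates strictly before `y` fails to be
active (i.e. whenever `x` is active, so is `y`), then seeding `x` lets the
original network simulate the augmented one. -/
lemma aux_simulate {ι : Type*} [DecidableEq ι] (V : Finset ι)
    (W W' : ι → ι → ℝ) (b : ι → ℝ) (hW : ∀ u v, 0 ≤ W u v)
    (x y : ι) (hxy : x ≠ y)
    (hagree : ∀ a c : ι, ¬(a = x ∧ c = y) → ¬(a = y ∧ c = x) → W' a c = W a c)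
    (S : Finset ι)
    (hprop : ∀ t, x ∈ activeSet V W' b S t → y ∈ activeSet V W' b S t) :
    ∀ t, activeSet V W' b S t ⊆ activeSet V W b (S ∪ {x}) t := by
  intro t
  induction t with
  | zero => exact subset_union_left
  | succ t ih =>
      intro u hu
      rcases Finset.mem_union.1 hu with hu | hu
      · exact Finset.mem_union.2 (Or.inl (ih hu))
      · rcases Finset.mem_filter.1 hu with ⟨huV, hsum⟩
        by_cases hux : u = x
        · subst hux
          exact Finset.mem_union.2 (Or.inl
            (seed_subset_activeSet V W b (S ∪ {u}) t
              (Finset.mem_union.2 (Or.inr (Finset.mem_singleton_self u)))))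
        · by_cases huy : u = y
          · subst huy
            by_cases hxA : x ∈ activeSet V W' b S t
            · exact Finset.mem_union.2 (Or.inl (ih (hprop t hxA)))
            · have hsum' : (∑ v ∈ activeSet V W' b S t, W' v u)
                  = ∑ v ∈ activeSet V W' b S t, W v u := by
                apply Finset.sum_congr rfl
                intro v hv
                exact hagree v u (fun h => hxA (h.1 ▸ hv))
                  (fun h => hxy (h.2.symm ▸ rfl))
              have hle : (∑ v ∈ activeSet V W' b S t, W v u)
                  ≤ ∑ v ∈ activeSet V W b (S ∪ {x}) t, W v u :=
                Finset.sum_le_sum_of_subset_of_nonneg ih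
                  (fun v _ _ => hW v u)
              exact Finset.mem_union.2 (Or.inr
                (Finset.mem_filter.2 ⟨huV, le_trans (hsum.trans (le_of_eq hsum')) hle⟩))
          · have hsum' : (∑ v ∈ activeSet V W' b S t, W' v u)
                = ∑ v ∈ activeSet V W' b S t, W v u := by
              apply Finset.sum_congr rfl
              intro v hv
              exact hagree v u (fun h => huy h.2) (fun h => hux h.2)
            have hle : (∑ v ∈ activeSet V W' b S t, W v u)
                ≤ ∑ v ∈ activeSet V W b (S ∪ {x}) t, W v u :=
              Finset.sum_le_sum_of_subset_of_nonneg ih (fun v _ _ => hW v u)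
            exact Finset.mem_union.2 (Or.inr
              (Finset.mem_filter.2 ⟨huV, le_trans (hsum.trans (le_of_eq hsum')) hle⟩))

/-- at most one of a mutually added pair of edges is useful:
if `S` achieves full influenceability after adding the edges `v₁ → v₂` and
`v₂ → v₁`, then `S ∪ {v₁}` or `S ∪ {v₂}` achieves full influenceability in
the original network. -/
theorem at_most_one_added_edge_useful {ι : Type*} [DecidableEq ι]
    (V : Finset ι) (W W' : ι → ι → ℝ) (b : ι → ℝ)
    (hW : ∀ u v, 0 ≤ W u v) (hb : ∀ u, 0 ≤ b u)
    (v₁ v₂ : ι) (hv₁ : v₁ ∈ V) (hv₂ : v₂ ∈ V) (hne : v₁ ≠ v₂)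
    (h₁ : W v₁ v₂ = 0) (h₂ : W v₂ v₁ = 0)
    (w₁ w₂ : ℝ) (hw₁ : 0 < w₁) (hw₂ : 0 < w₂)
    (hW'₁ : W' v₁ v₂ = w₁) (hW'₂ : W' v₂ v₁ = w₂)
    (hagree : ∀ a c : ι, ¬(a = v₁ ∧ c = v₂) → ¬(a = v₂ ∧ c = v₁) →
      W' a c = W a c)
    (S : Finset ι) (hS : S ⊆ V) (hfull : FullInf V W' b S) :
    FullInf V W b (S ∪ {v₁}) ∨ FullInf V W b (S ∪ {v₂}) := by
  have hfull' : activeSet V W' b S V.card = V := hfull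
  by_cases hcase : ∀ t, v₁ ∈ activeSet V W' b S t → v₂ ∈ activeSet V W' b S t
  · left
    have hsub := aux_simulate V W W' b hW v₁ v₂ hne hagree S hcase V.card
    have hSV : S ∪ {v₁} ⊆ V :=
      Finset.union_subset hS (Finset.singleton_subset_iff.2 hv₁)
    exact Finset.Subset.antisymm (activeSet_subset_V V W b _ hSV V.card)
      (le_trans (le_of_eq hfull'.symm) hsub)
  · right
    push_neg at hcase
    obtain ⟨t₀, hx₀, hy₀⟩ := hcase
    have hprop : ∀ t, v₂ ∈ activeSet V W' b S t → v₁ ∈ activeSet V W' b S t := by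
      intro t ht
      have ht₀ : t₀ ≤ t := by
        by_contra h
        push_neg at h
        exact hy₀ (activeSet_monotone V W' b S h.le ht)
      exact activeSet_monotone V W' b S ht₀ hx₀
    have hagree' : ∀ a c : ι, ¬(a = v₂ ∧ c = v₁) → ¬(a = v₁ ∧ c = v₂) →
        W' a c = W a c := fun a c h1 h2 => hagree a c h2 h1
    have hsub := aux_simulate V W W' b hW v₂ v₁ hne.symm hagree' S hprop V.card
    have hSV : S ∪ {v₂} ⊆ V :=
      Finset.union_subset hS (Finset.singleton_subset_iff.2 hv₂)
    exact Finset.Subset.antisymm (activeSet_subset_V V W b _ hSV V.card)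
      (le_trans (le_of_eq hfull'.symm) hsub)
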